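/- Let δ > 0, let Δ₀ be a real number with |Δ₀| < δ, let V₁, V₂, … be independent real random variables each uniformly distributed on [−δ, δ], and define recursively Δⱼ = Δⱼ₋₁ − Vⱼ for j ≥ 1. Then the probability that |Vⱼ| + |Δⱼ| < δ holds for all j ≥ 1 is 0; i.e., almost surely the run of consecutive forced moves is finite. -/

import Mathlib

open MeasureTheory ProbabilityTheory

/-- The uniform probability measure on the interval `[a, b]`. -/
noncomputable def uniformIcc (a b : ℝ) : Measure ℝ :=
  (ENNReal.ofReal (b - a))⁻¹ • volume.restrict (Set.Icc a b)

/-- The key single-step bound: for any `c : ℝ`, the uniform measure on `[-δ, δ]` of the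
set of `v` with `|v| + |c - v| < δ` is at most `1/2`. -/
lemma uniformIcc_forced_le (δ : ℝ) (hδ : 0 < δ) (c : ℝ) :
    uniformIcc (-δ) δ {v | |v| + |c - v| < δ} ≤ 2⁻¹ := by
  have hsub : {v : ℝ | |v| + |c - v| < δ} ⊆ Set.Ioo ((c - δ) / 2) ((c + δ) / 2) := by
    intro v hv
    simp only [Set.mem_setOf_eq] at hv
    have h1 : |2 * v - c| ≤ |v| + |c - v| := by
      have := abs_sub (v) (c - v)
      calc |2 * v - c| = |v - (c - v)| := by ring_nf
        _ ≤ |v| + |c - v| := abs_sub _ _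
    have h2 : |2 * v - c| < δ := lt_of_le_of_lt h1 hv
    rw [abs_lt] at h2
    constructor <;> [linarith [h2.1]; linarith [h2.2]]
  have hmono : uniformIcc (-δ) δ {v | |v| + |c - v| < δ}
      ≤ uniformIcc (-δ) δ (Set.Ioo ((c - δ) / 2) ((c + δ) / 2)) := measure_mono hsub
  refine hmono.trans ?_
  rw [uniformIcc, Measure.smul_apply, smul_eq_mul,
    Measure.restrict_apply' measurableSet_Icc]
  have hvol : volume (Set.Ioo ((c - δ) / 2) ((c + δ) / 2) ∩ Set.Icc (-δ) δ)
      ≤ ENNReal.ofReal δ := by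
    refine (measure_mono Set.inter_subset_left).trans ?_
    rw [Real.volume_Ioo]
    apply ENNReal.ofReal_le_ofReal
    ring_nf
    linarith
  calc (ENNReal.ofReal (δ - -δ))⁻¹ * volume (Set.Ioo ((c - δ) / 2) ((c + δ) / 2) ∩ Set.Icc (-δ) δ)
      ≤ (ENNReal.ofReal (δ - -δ))⁻¹ * ENNReal.ofReal δ := by
        exact mul_le_mul_right hvol _
    _ = 2⁻¹ := by
        have h2δ : (ENNReal.ofReal (δ - -δ)) = 2 * ENNReal.ofReal δ := by
          rw [show δ - -δ = δ + δ by ring, ENNReal.ofReal_add hδ.le hδ.le, two_mul]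
        rw [h2δ, ENNReal.mul_inv (Or.inl two_ne_zero) (Or.inl (ENNReal.ofNat_ne_top)),
          mul_assoc, ENNReal.inv_mul_cancel (by simpa using hδ) ENNReal.ofReal_ne_top,
          mul_one]

/-- Let `|Δ₀| < δ`, let `V₁, V₂, …` be i.i.d. uniform on `[-δ, δ]`, and let
`Δⱼ = Δⱼ₋₁ - Vⱼ` for `j ≥ 1`. Then the probability that `|Vⱼ| + |Δⱼ| < δ` holds for
all `j ≥ 1` is `0`: almost surely the run of consecutive forced moves is finite. -/
theorem stmt2 {Ω : Type*} [MeasurableSpace Ω] (P : Measure Ω) [IsProbabilityMeasure P]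
    (δ Δ₀ : ℝ) (hδ : 0 < δ) (hΔ₀ : |Δ₀| < δ)
    (V : ℕ → Ω → ℝ) (hVmeas : ∀ j, Measurable (V j))
    (hindep : iIndepFun V P)
    (hVunif : ∀ j, Measure.map (V j) P = uniformIcc (-δ) δ)
    (Δ : ℕ → Ω → ℝ) (hΔ0 : Δ 0 = fun _ => Δ₀)
    (hrec : ∀ j, Δ (j + 1) = fun ω => Δ j ω - V (j + 1) ω) :
    P {ω | ∀ j, 1 ≤ j → |V j ω| + |Δ j ω| < δ} = 0 := by
  -- closed form for Δ
  have hΔsum : ∀ j ω, Δ j ω = Δ₀ - ∑ i ∈ Finset.Icc 1 j, V i ω := by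
    intro j
    induction j with
    | zero => intro ω; simp [hΔ0]
    | succ n ih =>
        intro ω
        rw [hrec n]
        simp only
        rw [ih ω, Finset.sum_Icc_succ_top (Nat.succ_le_succ (Nat.zero_le n))]
        ring
  -- the events
  set E : ℕ → Set Ω := fun k => {ω | ∀ j, 1 ≤ j → j ≤ k → |V j ω| + |Δ j ω| < δ} with hE
  have key : ∀ k, P (E (k + 1)) ≤ 2⁻¹ * P (E k) := by
    intro k
    classical
    set ι := (Finset.Icc 1 k : Finset ℕ) with hι
    set Y : Ω → (ι → ℝ) := fun ω i => V i ω with hYdef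
    set X : Ω → ℝ := V (k + 1) with hXdef
    have hY : Measurable Y := measurable_pi_lambda _ (fun i => hVmeas i)
    have hX : Measurable X := hVmeas (k + 1)
    -- independence of Y and X
    have hindYX : IndepFun Y X P := by
      have hdisj : Disjoint ι ({k + 1} : Finset ℕ) := by
        simp [hι, Finset.disjoint_singleton_right]
      have h := hindep.indepFun_finset ι {k + 1} hdisj hVmeas
      have hmem : (k + 1) ∈ ({k + 1} : Finset ℕ) := Finset.mem_singleton_self _
      have h2 := h.comp (measurable_id) (measurable_pi_apply (⟨k + 1, hmem⟩ : ({k+1} : Finset ℕ)))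
      exact h2
    -- lift, ψ, B
    set lift : (ι → ℝ) → ℕ → ℝ := fun x i => if h : i ∈ ι then x ⟨i, h⟩ else 0 with hliftdef
    have hliftm : ∀ i, Measurable (fun x : ι → ℝ => lift x i) := by
      intro i
      by_cases h : i ∈ ι
      · simpa [hliftdef, h] using measurable_pi_apply (⟨i, h⟩ : ι)
      · simpa [hliftdef, h] using measurable_const (α := ι → ℝ) (a := (0:ℝ))
    set ψ : ℕ → (ι → ℝ) → ℝ := fun j x => Δ₀ - ∑ i ∈ Finset.Icc 1 j, lift x i with hψdef
    have hψm : ∀ j, Measurable (ψ j) := by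
      intro j
      apply Measurable.const_sub
      exact Finset.measurable_sum _ (fun i _ => hliftm i)
    set B : Set (ι → ℝ) := {x | ∀ j, 1 ≤ j → j ≤ k → |lift x j| + |ψ j x| < δ} with hBdef
    have hB : MeasurableSet B := by
      have : B = ⋂ j, {x | 1 ≤ j → j ≤ k → |lift x j| + |ψ j x| < δ} := by
        ext x; simp [hBdef, Set.mem_iInter]
      rw [this]
      refine MeasurableSet.iInter fun j => ?_
      by_cases hj : 1 ≤ j ∧ j ≤ k
      · have heq : {x : ι → ℝ | 1 ≤ j → j ≤ k → |lift x j| + |ψ j x| < δ}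
            = {x | |lift x j| + |ψ j x| < δ} := by
          ext x; simp [hj.1, hj.2]
        rw [heq]
        exact measurableSet_lt (((hliftm j).abs).add ((hψm j).abs)) measurable_const
      · have heq : {x : ι → ℝ | 1 ≤ j → j ≤ k → |lift x j| + |ψ j x| < δ} = Set.univ := by
          ext x; simp only [Set.mem_setOf_eq, Set.mem_univ, iff_true]
          intro h1 h2; exact absurd ⟨h1, h2⟩ hj
        rw [heq]; exact MeasurableSet.univ
    -- key identifications
    have hliftY : ∀ ω, ∀ i ∈ ι, lift (Y ω) i = V i ω := by
      intro ω i hi; simp [hliftdef, hYdef, hi]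
    have hψY : ∀ ω, ∀ j ≤ k, ψ j (Y ω) = Δ j ω := by
      intro ω j hj
      rw [hψdef]
      simp only
      rw [hΔsum j ω]
      congr 1
      apply Finset.sum_congr rfl
      intro i hi
      apply hliftY
      rw [hι]
      rw [Finset.mem_Icc] at hi ⊢
      exact ⟨hi.1, hi.2.trans hj⟩
    have hEkB : E k = Y ⁻¹' B := by
      ext ω
      simp only [hE, hBdef, Set.mem_setOf_eq, Set.mem_preimage]
      constructor
      · intro h j h1 h2
        rw [hψY ω j h2]
        have : lift (Y ω) j = V j ω := hliftY ω j (by rw [hι, Finset.mem_Icc]; exact ⟨h1, h2⟩)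
        rw [this]
        exact h j h1 h2
      · intro h j h1 h2
        have h' := h j h1 h2
        rw [hψY ω j h2] at h'
        have : lift (Y ω) j = V j ω := hliftY ω j (by rw [hι, Finset.mem_Icc]; exact ⟨h1, h2⟩)
        rw [this] at h'
        exact h'
    -- the set C in the product space
    set C : Set ((ι → ℝ) × ℝ) :=
      (B ×ˢ (Set.univ : Set ℝ)) ∩ {p | |p.2| + |ψ k p.1 - p.2| < δ} with hCdef
    have hC : MeasurableSet C := by
      refine (hB.prod MeasurableSet.univ).inter ?_
      exact measurableSet_lt
        ((measurable_snd.abs).add (((hψm k).comp measurable_fst).sub measurable_snd).abs)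
        measurable_const
    have hEsucc : E (k + 1) = (fun ω => (Y ω, X ω)) ⁻¹' C := by
      ext ω
      simp only [hE, hCdef, Set.mem_setOf_eq, Set.mem_preimage, Set.mem_inter_iff,
        Set.mem_prod, Set.mem_univ, and_true, hBdef]
      constructor
      · intro h
        constructor
        · intro j h1 h2
          rw [hψY ω j h2, hliftY ω j (by rw [hι, Finset.mem_Icc]; exact ⟨h1, h2⟩)]
          exact h j h1 (h2.trans (Nat.le_succ k))
        · have h' := h (k + 1) (Nat.succ_le_succ (Nat.zero_le k)) le_rfl
          rw [hψY ω k le_rfl]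
          have : Δ (k + 1) ω = Δ k ω - X ω := by rw [hrec k]
          rw [this] at h'
          exact h'
      · rintro ⟨hB', hlast⟩
        intro j h1 h2
        rcases Nat.lt_or_ge j (k + 1) with hjk | hjk
        · have h2' : j ≤ k := Nat.lt_succ_iff.mp hjk
          have := hB' j h1 h2'
          rw [hψY ω j h2', hliftY ω j (by rw [hι, Finset.mem_Icc]; exact ⟨h1, h2'⟩)] at this
          exact this
        · have hj : j = k + 1 := le_antisymm h2 hjk
          subst hj
          rw [hψY ω k le_rfl] at hlast
          have : Δ (k + 1) ω = Δ k ω - X ω := by rw [hrec k]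
          rw [this]
          exact hlast
    -- push forward
    have hmap : P.map (fun ω => (Y ω, X ω)) = (P.map Y).prod (P.map X) :=
      (indepFun_iff_map_prod_eq_prod_map_map hY.aemeasurable hX.aemeasurable).mp hindYX
    have hPmeas : P (E (k + 1)) = ((P.map Y).prod (P.map X)) C := by
      rw [hEsucc, ← hmap, Measure.map_apply (hY.prodMk hX) hC]
    rw [hPmeas]
    haveI : IsProbabilityMeasure (P.map X) := Measure.isProbabilityMeasure_map hX.aemeasurable
    rw [Measure.prod_apply hC]
    have hbound : ∀ x : ι → ℝ, (P.map X) (Prod.mk x ⁻¹' C)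
        ≤ B.indicator (fun _ => (2⁻¹ : ENNReal)) x := by
      intro x
      by_cases hx : x ∈ B
      · have hpre : Prod.mk x ⁻¹' C = {v | |v| + |ψ k x - v| < δ} := by
          ext v
          simp [hCdef, hx]
        rw [hpre, Set.indicator_of_mem hx, hVunif (k + 1)]
        exact uniformIcc_forced_le δ hδ (ψ k x)
      · have hpre : Prod.mk x ⁻¹' C = ∅ := by
          ext v; simp [hCdef, hx]
        rw [hpre, Set.indicator_of_notMem hx]
        simp
    calc ∫⁻ x, (P.map X) (Prod.mk x ⁻¹' C) ∂(P.map Y)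
        ≤ ∫⁻ x, B.indicator (fun _ => (2⁻¹ : ENNReal)) x ∂(P.map Y) :=
          lintegral_mono hbound
      _ = 2⁻¹ * (P.map Y) B := by
          rw [lintegral_indicator hB]
          simp [mul_comm]
      _ = 2⁻¹ * P (E k) := by
          rw [Measure.map_apply hY hB, ← hEkB]
  -- iterate the bound
  have hub : ∀ k, P (E k) ≤ (2⁻¹ : ENNReal) ^ k := by
    intro k
    induction k with
    | zero => simpa using prob_le_one
    | succ n ih =>
        calc P (E (n + 1)) ≤ 2⁻¹ * P (E n) := key n
          _ ≤ 2⁻¹ * (2⁻¹ : ENNReal) ^ n := mul_le_mul_right ih _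
          _ = (2⁻¹ : ENNReal) ^ (n + 1) := (pow_succ' _ n).symm
  have hsubset : ∀ k, {ω | ∀ j, 1 ≤ j → |V j ω| + |Δ j ω| < δ} ⊆ E k := by
    intro k ω hω j h1 _; exact hω j h1
  have hle : ∀ k, P {ω | ∀ j, 1 ≤ j → |V j ω| + |Δ j ω| < δ} ≤ (2⁻¹ : ENNReal) ^ k :=
    fun k => (measure_mono (hsubset k)).trans (hub k)
  have htend : Filter.Tendsto (fun k => (2⁻¹ : ENNReal) ^ k) Filter.atTop (nhds 0) :=
    ENNReal.tendsto_pow_atTop_nhds_zero_of_lt_one (by norm_num)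
  have : P {ω | ∀ j, 1 ≤ j → |V j ω| + |Δ j ω| < δ} ≤ 0 := ge_of_tendsto' htend hle
  exact le_antisymm this zero_le
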